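/- L(χ_5, 2) = 4π²/(25√5), i.e. ∑_{n≥1} χ_5(n)/n² = 4π²/(25√5). -/

import Mathlib

/-- The quadratic Dirichlet character modulo 5 given by the Legendre symbol `(n/5)`. -/
def chi5 (n : ℕ) : ℝ :=
  if n % 5 = 1 ∨ n % 5 = 4 then 1 else if n % 5 = 2 ∨ n % 5 = 3 then -1 else 0

open Real Polynomial

lemma b2 : _root_.bernoulli 2 = 1/6 := by
  rw [bernoulli_eq_bernoulli'_of_ne_one (by norm_num), bernoulli'_two]

lemma cos_two_pi_div_five : Real.cos (2*π/5) = (Real.sqrt 5 - 1)/4 := by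
  have : Real.cos (2*π/5) = 2 * Real.cos (π/5)^2 - 1 := by
    rw [show 2*π/5 = 2*(π/5) by ring, Real.cos_two_mul]
  rw [this, Real.cos_pi_div_five]
  have h5 : Real.sqrt 5 ^ 2 = 5 := Real.sq_sqrt (by norm_num)
  nlinarith [h5]

lemma cos_four_pi_div_five : Real.cos (4*π/5) = -((1+Real.sqrt 5)/4) := by
  rw [show 4*π/5 = π - π/5 by ring, Real.cos_pi_sub, Real.cos_pi_div_five]

lemma hS {x : ℝ} (hx : x ∈ Set.Icc (0:ℝ) 1) :
    HasSum (fun n : ℕ => 1 / (n : ℝ) ^ 2 * Real.cos (2 * π * n * x))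
      (π ^ 2 * (x ^ 2 - x + 1/6)) := by
  have h := hasSum_one_div_nat_pow_mul_cos (k := 1) one_ne_zero hx
  have hp : (Polynomial.map (algebraMap ℚ ℝ) (Polynomial.bernoulli 2)).eval x
      = x^2 - x + 1/6 := by
    simp [Polynomial.bernoulli, Finset.sum_range_succ, _root_.bernoulli_one, b2]
    ring
  norm_num [hp] at h
  convert h using 2
  · ring
  · ring

lemma key (n : ℕ) : (2/Real.sqrt 5) *
    (Real.cos (2*π*n*(1/5)) - Real.cos (2*π*n*(2/5))) = chi5 n := by
  have hs : Real.sqrt 5 * Real.sqrt 5 = 5 := Real.mul_self_sqrt (by norm_num)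
  have hne : Real.sqrt 5 ≠ 0 := by positivity
  obtain ⟨q, r, hr, rfl⟩ : ∃ q r, r < 5 ∧ n = 5*q + r :=
    ⟨n/5, n%5, Nat.mod_lt _ (by norm_num), (Nat.div_add_mod' n 5 ▸ by omega)⟩
  interval_cases r
  · rw [show (2*π*((5*q+0:ℕ):ℝ)*(1/5) : ℝ) = 0 + q*(2*π) by push_cast; ring,
      show (2*π*((5*q+0:ℕ):ℝ)*(2/5) : ℝ) = 0 + ((2*q:ℕ):ℝ)*(2*π) by push_cast; ring,
      Real.cos_add_nat_mul_two_pi, Real.cos_add_nat_mul_two_pi]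
    simp [chi5, Nat.mul_add_mod]
  · rw [show (2*π*((5*q+1:ℕ):ℝ)*(1/5) : ℝ) = 2*π/5 + q*(2*π) by push_cast; ring,
      show (2*π*((5*q+1:ℕ):ℝ)*(2/5) : ℝ) = 4*π/5 + ((2*q:ℕ):ℝ)*(2*π) by push_cast; ring,
      Real.cos_add_nat_mul_two_pi, Real.cos_add_nat_mul_two_pi,
      cos_two_pi_div_five, cos_four_pi_div_five]
    simp only [chi5, Nat.mul_add_mod]
    norm_num
    field_simp
    nlinarith [hs]
  · rw [show (2*π*((5*q+2:ℕ):ℝ)*(1/5) : ℝ) = 4*π/5 + q*(2*π) by push_cast; ring,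
      show (2*π*((5*q+2:ℕ):ℝ)*(2/5) : ℝ) = ((2*q+1:ℕ):ℝ)*(2*π) - 2*π/5 by push_cast; ring,
      Real.cos_add_nat_mul_two_pi, Real.cos_nat_mul_two_pi_sub,
      cos_two_pi_div_five, cos_four_pi_div_five]
    simp only [chi5, Nat.mul_add_mod]
    norm_num
    field_simp
    nlinarith [hs]
  · rw [show (2*π*((5*q+3:ℕ):ℝ)*(1/5) : ℝ) = ((q+1:ℕ):ℝ)*(2*π) - 4*π/5 by push_cast; ring,
      show (2*π*((5*q+3:ℕ):ℝ)*(2/5) : ℝ) = 2*π/5 + ((2*q+1:ℕ):ℝ)*(2*π) by push_cast; ring,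
      Real.cos_add_nat_mul_two_pi, Real.cos_nat_mul_two_pi_sub,
      cos_two_pi_div_five, cos_four_pi_div_five]
    simp only [chi5, Nat.mul_add_mod]
    norm_num
    field_simp
    nlinarith [hs]
  · rw [show (2*π*((5*q+4:ℕ):ℝ)*(1/5) : ℝ) = ((q+1:ℕ):ℝ)*(2*π) - 2*π/5 by push_cast; ring,
      show (2*π*((5*q+4:ℕ):ℝ)*(2/5) : ℝ) = ((2*q+2:ℕ):ℝ)*(2*π) - 4*π/5 by push_cast; ring,
      Real.cos_nat_mul_two_pi_sub, Real.cos_nat_mul_two_pi_sub,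
      cos_two_pi_div_five, cos_four_pi_div_five]
    simp only [chi5, Nat.mul_add_mod]
    norm_num
    field_simp
    nlinarith [hs]

/-- `L(χ₅, 2) = 4π²/(25√5)`. -/
theorem L_chi5_two : (∑' n : ℕ, chi5 (n + 1) / ((n : ℝ) + 1) ^ 2) =
    4 * Real.pi ^ 2 / (25 * Real.sqrt 5) := by
  have hs : Real.sqrt 5 * Real.sqrt 5 = 5 := Real.mul_self_sqrt (by norm_num)
  have hne : Real.sqrt 5 ≠ 0 := by positivity
  have h1 := hS (x := 1/5) (by norm_num)
  have h2 := hS (x := 2/5) (by norm_num)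
  have h3 := (h1.sub h2).mul_left (2/Real.sqrt 5)
  have h4 : HasSum (fun n : ℕ => chi5 n / (n:ℝ)^2) (4 * Real.pi ^ 2 / (25 * Real.sqrt 5)) := by
    convert h3 using 1
    · rfl
    · funext n
      rcases eq_or_ne n 0 with rfl | hn
      · simp [chi5]
      · rw [← key n]
        have : ((n:ℝ))^2 ≠ 0 := by positivity
        field_simp
    · field_simp
      ring

  rw [← h4.tsum_eq, Summable.tsum_eq_zero_add h4.summable]
  push_cast
  simp [chi5]
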